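/- There exists a good family {S^n_m : n,m ∈ ω} of clopen subsets of 2^ω such that for every n and every X ∈ [ω]^{≤2^n}, the intersection ⋂_{j∈X} S^n_j is nonempty. -/

import Mathlib

namespace GoodFamily

/-- The clopen cylinder in Cantor space determined by a finite word. -/
def cyl (w : List Bool) : Set (ℕ → Bool) := {x | ∀ i < w.length, x i = w.getD i false}

lemma cyl_clopen (w : List Bool) : IsClopen (cyl w) := by
  have : cyl w = ⋂ i ∈ Finset.range w.length, (fun x : ℕ → Bool => x i) ⁻¹' {w.getD i false} := by
    ext x; simp [cyl]
  rw [this]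
  exact isClopen_biInter_finset fun i _ => (isClopen_discrete _).preimage (continuous_apply i)

lemma self_mem_cyl (w : List Bool) : (fun i => w.getD i false) ∈ cyl w := fun _ _ => rfl

lemma cyl_anti {s w : List Bool} (h : s <+: w) : cyl w ⊆ cyl s := by
  obtain ⟨r, rfl⟩ := h
  intro x hx i hi
  have := hx i (by simp; omega)
  rwa [List.getD_append _ _ _ _ hi] at this

lemma exists_agree_of_mem_open {V : Set (ℕ → Bool)} (hV : IsOpen V) {x : ℕ → Bool}
    (hx : x ∈ V) : ∃ k, ∀ y : ℕ → Bool, (∀ i < k, y i = x i) → y ∈ V := by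
  obtain ⟨I, u, hIu, hsub⟩ := isOpen_pi_iff.1 hV x hx
  refine ⟨I.sup id + 1, fun y hy => hsub ?_⟩
  intro i hi
  have : y i = x i := hy i (Nat.lt_succ_of_le (Finset.le_sup (f := id) hi))
  rw [this]; exact (hIu i hi).2

/-- The restriction of `x` to its first `k` coordinates, as a word. -/
def restr (x : ℕ → Bool) (k : ℕ) : List Bool := List.ofFn fun i : Fin k => x i

@[simp] lemma length_restr (x : ℕ → Bool) (k : ℕ) : (restr x k).length = k := by
  simp [restr]

lemma getD_restr (x : ℕ → Bool) {k i : ℕ} (h : i < k) :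
    (restr x k).getD i false = x i := by
  rw [List.getD_eq_getElem _ _ (by simpa using h)]
  simp [restr]

/-- A piece: a level `l`, a bound `b`, and a finite list of words. -/
abbrev Piece := ℕ × ℕ × List (List Bool)

/-- A piece is valid if all its words have length in `[l, b)` and every binary string of
length `l` has an extension among the words. -/
def ValidPiece (p : Piece) : Prop :=
  (∀ w ∈ p.2.2, p.1 ≤ w.length ∧ w.length < p.2.1) ∧
  (∀ s : List Bool, s.length = p.1 → ∃ w ∈ p.2.2, s <+: w)

abbrev Desc := List Piece

/-- Pieces occupy disjoint intervals of levels. -/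
def PieceLe (p q : Piece) : Prop := p.2.1 ≤ q.1

def allStrings : ℕ → List (List Bool)
  | 0 => [[]]
  | n + 1 => (allStrings n).flatMap fun s => [false :: s, true :: s]

lemma mem_allStrings {n : ℕ} {s : List Bool} : s ∈ allStrings n ↔ s.length = n := by
  induction n generalizing s with
  | zero => cases s <;> simp [allStrings]
  | succ n ih =>
    cases s with
    | nil => simp [allStrings, ih]
    | cons a t =>
      simp only [allStrings, List.mem_flatMap, List.mem_cons, List.length_cons]
      constructor
      · rintro ⟨u, hu, h | h | h⟩ <;> simp_all [ih]
      · intro h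
        exact ⟨t, ih.2 (by omega), by cases a <;> simp⟩

lemma le_foldr_max {L : List ℕ} {a : ℕ} (h : a ∈ L) : a ≤ L.foldr max 0 := by
  induction L with
  | nil => simp at h
  | cons b L ih =>
    simp only [List.mem_cons] at h
    rcases h with rfl | h
    · simp [le_max_iff]
    · simp only [List.foldr_cons, le_max_iff]
      exact Or.inr (ih h)

/-- The clopen set determined by a descriptor: the union of all cylinders of all its pieces. -/
def descSet (d : Desc) : Set (ℕ → Bool) := {x | ∃ p ∈ d, ∃ w ∈ p.2.2, x ∈ cyl w}

lemma descSet_clopen (d : Desc) : IsClopen (descSet d) := by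
  have : descSet d = ⋃ w ∈ {w | w ∈ d.flatMap (fun p => p.2.2)}, cyl w := by
    ext x
    simp only [descSet, Set.mem_setOf_eq, Set.mem_iUnion, List.mem_flatMap]
    tauto
  rw [this]
  exact (List.finite_toSet _).isClopen_biUnion fun w _ => cyl_clopen w

lemma exists_piece {V : Set (ℕ → Bool)} (hVo : IsOpen V) (hVd : Dense V) (l : ℕ) :
    ∃ p : Piece, ValidPiece p ∧ p.1 = l ∧ p.1 < p.2.1 ∧ ∀ w ∈ p.2.2, cyl w ⊆ V := by
  have key : ∀ s : List Bool, s.length = l → ∃ w : List Bool, s <+: w ∧ cyl w ⊆ V := by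
    intro s hs
    obtain ⟨x, hxc, hxV⟩ := hVd.inter_open_nonempty (cyl s) (cyl_clopen s).isOpen
      ⟨_, self_mem_cyl s⟩
    obtain ⟨k, hk⟩ := exists_agree_of_mem_open hVo hxV
    refine ⟨s ++ restr (fun j => x (l + j)) k, List.prefix_append _ _, ?_⟩
    intro y hy
    apply hk
    intro i hi
    by_cases hil : i < l
    · have h1 := hy i (by simp; omega)
      rw [List.getD_append _ _ _ _ (by omega)] at h1
      rw [h1, ← hxc i (by omega)]
    · have h1 := hy i (by simp; omega)
      rw [List.getD_append_right _ _ _ _ (by omega)] at h1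
      rw [h1, getD_restr _ (by omega)]
      congr 1; omega
  classical
  set W : List (List Bool) :=
    (allStrings l).pmap (fun s h => Classical.choose (key s h))
      (fun s hs => mem_allStrings.1 hs) with hW
  set b : ℕ := (W.map List.length).foldr max 0 + 1 with hb
  have hmemW : ∀ w ∈ W, ∃ s, ∃ h : s.length = l, w = Classical.choose (key s h) := by
    intro w hw
    rw [hW] at hw
    obtain ⟨s, hs, rfl⟩ := List.mem_pmap.1 hw
    exact ⟨s, mem_allStrings.1 hs, rfl⟩
  have hlen : ∀ w ∈ W, l ≤ w.length ∧ w.length < b := by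
    intro w hw
    obtain ⟨s, h, hw2⟩ := hmemW w hw
    have h2 := (Classical.choose_spec (key s h)).1.length_le
    have h3 : w.length ∈ W.map List.length := List.mem_map.2 ⟨w, hw, rfl⟩
    have h4 := le_foldr_max h3
    constructor
    · rw [hw2]; omega
    · omega
  refine ⟨(l, b, W), ⟨hlen, ?_⟩, rfl, ?_, ?_⟩
  · intro s hs
    refine ⟨Classical.choose (key s hs), ?_, (Classical.choose_spec (key s hs)).1⟩
    rw [hW]
    exact List.mem_pmap.2 ⟨s, mem_allStrings.2 hs, rfl⟩
  · have hrep : (List.replicate l false) ∈ allStrings l := mem_allStrings.2 (by simp)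
    have hw0 : Classical.choose (key _ (by simp : (List.replicate l false).length = l)) ∈ W := by
      rw [hW]; exact List.mem_pmap.2 ⟨_, hrep, rfl⟩
    have := hlen _ hw0
    simp only []
    omega
  · intro w hw
    obtain ⟨s, h, hw2⟩ := hmemW w hw
    rw [hw2]
    exact (Classical.choose_spec (key s h)).2

lemma exists_desc {V : Set (ℕ → Bool)} (hVo : IsOpen V) (hVd : Dense V) :
    ∀ (c l0 : ℕ), ∃ d : Desc,
      (∀ p ∈ d, ValidPiece p) ∧ d.Pairwise PieceLe ∧ d.length = c ∧
      (∀ p ∈ d, l0 ≤ p.1) ∧ ∀ p ∈ d, ∀ w ∈ p.2.2, cyl w ⊆ V := by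
  intro c
  induction c with
  | zero => exact fun l0 => ⟨[], by simp, by simp, rfl, by simp, by simp⟩
  | succ c ih =>
    intro l0
    obtain ⟨p, hvp, hpl, hplb, hpV⟩ := exists_piece hVo hVd l0
    obtain ⟨d, h1, h2, h3, h4, h5⟩ := ih p.2.1
    refine ⟨p :: d, ?_, ?_, by simp [h3], ?_, ?_⟩
    · intro q hq
      rcases List.mem_cons.1 hq with rfl | hq
      · exact hvp
      · exact h1 q hq
    · exact List.pairwise_cons.2 ⟨fun q hq => h4 q hq, h2⟩
    · intro q hq
      rcases List.mem_cons.1 hq with rfl | hq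
      · omega
      · have := h4 q hq; omega
    · intro q hq
      rcases List.mem_cons.1 hq with rfl | hq
      · exact hpV
      · exact h5 q hq

lemma exists_min_key {α : Type*} (f : α → ℕ) :
    ∀ (l : List α), l ≠ [] → ∃ a ∈ l, ∀ b ∈ l, f a ≤ f b := by
  intro l
  induction l with
  | nil => simp
  | cons a l ih =>
    intro _
    rcases eq_or_ne l [] with rfl | hne
    · exact ⟨a, by simp, by simp⟩
    · obtain ⟨m, hm, hmin⟩ := ih hne
      rcases le_total (f a) (f m) with h | h
      · refine ⟨a, by simp, ?_⟩
        intro b hb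
        rcases List.mem_cons.1 hb with rfl | hb
        · exact le_refl _
        · exact h.trans (hmin b hb)
      · refine ⟨m, List.mem_cons_of_mem _ hm, ?_⟩
        intro b hb
        rcases List.mem_cons.1 hb with rfl | hb
        · exact h
        · exact hmin b hb

def headBnd : List Piece → ℕ
  | [] => 0
  | q :: _ => q.2.1

/-- The chaining lemma: descriptors whose pieces occupy disjoint intervals of levels, with
enough pieces above the current level, have a common point extending the current word. -/
lemma chain_lemma : ∀ (N : ℕ) (ds : List Desc) (t : List Bool),
    ds.length = N →
    (∀ d ∈ ds, (∀ p ∈ d, ValidPiece p) ∧ d.Pairwise PieceLe) →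
    (∀ d ∈ ds, ds.length ≤ (d.filter fun p => decide (t.length ≤ p.1)).length) →
    ∃ x, x ∈ cyl t ∧ ∀ d ∈ ds, x ∈ descSet d := by
  intro N
  induction N with
  | zero =>
    intro ds t h0 _ _
    rw [List.length_eq_zero_iff] at h0; subst h0
    exact ⟨fun i => t.getD i false, self_mem_cyl t, by simp⟩
  | succ N ih =>
    intro ds t hlen hv hcount
    have hne : ds ≠ [] := by intro h; simp [h] at hlen
    obtain ⟨dstar, hds, hmin⟩ :=
      exists_min_key (fun d => headBnd (d.filter fun p => decide (t.length ≤ p.1))) ds hne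
    have hcs := hcount dstar hds
    cases hfs : dstar.filter (fun p => decide (t.length ≤ p.1)) with
    | nil => rw [hfs, hlen] at hcs; simp at hcs
    | cons pstar rest =>
      have hpfil : pstar ∈ dstar.filter (fun p => decide (t.length ≤ p.1)) := by
        rw [hfs]; exact List.mem_cons_self
      have hpmem : pstar ∈ dstar := List.mem_of_mem_filter hpfil
      have hpt : t.length ≤ pstar.1 := by simpa using (List.mem_filter.1 hpfil).2
      have hvp : ValidPiece pstar := (hv dstar hds).1 pstar hpmem
      have hslen : (t ++ List.replicate (pstar.1 - t.length) false).length = pstar.1 := by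
        simp; omega
      obtain ⟨w, hwW, hsw⟩ := hvp.2 _ hslen
      have htw : t <+: w := (List.prefix_append _ _).trans hsw
      have hwlt : w.length < pstar.2.1 := (hvp.1 w hwW).2
      have htw_len : t.length ≤ w.length := htw.length_le
      have hlen' : (ds.erase dstar).length = N := by
        rw [List.length_erase_of_mem hds, hlen]
        omega
      have hcount' : ∀ d ∈ ds.erase dstar,
          (ds.erase dstar).length ≤ (d.filter fun p => decide (w.length ≤ p.1)).length := by
        intro d hd
        have hdds : d ∈ ds := List.mem_of_mem_erase hd
        have hc := hcount d hdds
        cases hfd : d.filter (fun p => decide (t.length ≤ p.1)) with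
        | nil => rw [hfd, hlen] at hc; simp at hc
        | cons q r =>
          have hkey : pstar.2.1 ≤ q.2.1 := by
            have h1 := hmin d hdds
            rw [hfs, hfd] at h1
            exact h1
          have hpair : (q :: r).Pairwise PieceLe := by
            rw [← hfd]
            exact ((hv d hdds).2).sublist List.filter_sublist
          have hr : ∀ p ∈ r, (fun p : Piece => decide (w.length ≤ p.1)) p = true := by
            intro p hp
            have hqp : PieceLe q p := (List.pairwise_cons.1 hpair).1 p hp
            simp only [decide_eq_true_eq]
            have : pstar.2.1 ≤ p.1 := hkey.trans hqp
            omega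
          have claim1 : d.filter (fun p => decide (w.length ≤ p.1)) =
              (d.filter (fun p => decide (t.length ≤ p.1))).filter
                (fun p => decide (w.length ≤ p.1)) := by
            rw [List.filter_filter]
            apply List.filter_congr
            intro p _
            by_cases hwp : w.length ≤ p.1
            · simp [hwp, htw_len.trans hwp]
            · simp [hwp]
          have hrlen : r.length = (d.filter (fun p => decide (t.length ≤ p.1))).length - 1 := by
            rw [hfd]; simp
          have : r.length ≤ (d.filter fun p => decide (w.length ≤ p.1)).length := by
            rw [claim1, hfd, List.filter_cons, List.filter_eq_self.2 hr]
            split <;> simp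
          rw [hlen']; rw [hlen] at hc; omega
      obtain ⟨x, hxw, hxall⟩ := ih (ds.erase dstar) w hlen'
        (fun d hd => hv d (List.mem_of_mem_erase hd)) hcount'
      refine ⟨x, cyl_anti htw hxw, ?_⟩
      intro d hd
      by_cases hdd : d = dstar
      · subst hdd
        exact ⟨pstar, hpmem, w, hwW, hxw⟩
      · exact hxall d ((List.mem_erase_of_ne hdd).2 hd)

/-- A good descriptor for parameters: a fixed word `σn` and a count `c`. -/
def GoodDesc (σn : List Bool) (c : ℕ) (d : Desc) : Prop :=
  (∀ p ∈ d, ValidPiece p) ∧ d.Pairwise PieceLe ∧ c ≤ d.length ∧ ∀ p ∈ d, σn.length ≤ p.1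

lemma goodDesc_meets {σn : List Bool} {c : ℕ} {d : Desc} {Un : Set (ℕ → Bool)}
    (hσ : cyl σn ⊆ Un) (hc : 1 ≤ c) (hg : GoodDesc σn c d) :
    (descSet d ∩ Un).Nonempty := by
  obtain ⟨h1, _, h3, h4⟩ := hg
  have hd : d ≠ [] := by
    intro h; rw [h] at h3; simp at h3; omega
  obtain ⟨p, hp⟩ := List.exists_mem_of_ne_nil d hd
  have hσl : σn.length ≤ p.1 := h4 p hp
  have hslen : (σn ++ List.replicate (p.1 - σn.length) false).length = p.1 := by
    simp; omega
  obtain ⟨w, hwW, hsw⟩ := (h1 p hp).2 _ hslen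
  exact ⟨fun i => w.getD i false, ⟨p, hp, w, hwW, self_mem_cyl w⟩,
    hσ (cyl_anti ((List.prefix_append _ _).trans hsw) (self_mem_cyl w))⟩

end GoodFamily

open GoodFamily in
/-- There exists a good family `{S^n_m}` of clopen subsets of Cantor space `2^ω`
(with respect to a given basis `{U n}` of nonempty open sets): every `S^n_m` meets
`U n`, every open dense set contains some `S^n_m` for each `n`, and moreover any
at most `2^n` of the sets `S^n_j` have nonempty intersection. -/
theorem exists_good_family_with_intersections
    (U : ℕ → Set (ℕ → Bool))
    (hU : TopologicalSpace.IsTopologicalBasis (Set.range U))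
    (hUne : ∀ n, (U n).Nonempty) :
    ∃ S : ℕ → ℕ → Set (ℕ → Bool),
      (∀ n m, IsClopen (S n m)) ∧
      (∀ n m, (S n m ∩ U n).Nonempty) ∧
      (∀ V : Set (ℕ → Bool), IsOpen V → Dense V → ∀ n, ∃ m, S n m ⊆ V) ∧
      (∀ (n : ℕ) (X : Finset ℕ), X.card ≤ 2 ^ n → (⋂ j ∈ X, S n j).Nonempty) := by
  classical
  have hσex : ∀ n, ∃ w : List Bool, cyl w ⊆ U n := by
    intro n
    obtain ⟨x, hx⟩ := hUne n
    obtain ⟨k, hk⟩ := exists_agree_of_mem_open (hU.isOpen ⟨n, rfl⟩) hx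
    refine ⟨restr x k, fun y hy => hk y ?_⟩
    intro i hi
    rw [hy i (by simpa using hi), getD_restr x hi]
  choose σ hσ using hσex
  refine ⟨fun n m => Option.elim (Encodable.decode m : Option Desc) Set.univ
      (fun d => if GoodDesc (σ n) (2 ^ n) d then descSet d else Set.univ), ?_, ?_, ?_, ?_⟩
  · intro n m
    cases h : (Encodable.decode m : Option Desc) with
    | none => simp [h, isClopen_univ]
    | some d =>
      simp only [h, Option.elim]
      split
      · exact descSet_clopen d
      · exact isClopen_univ
  · intro n m
    cases h : (Encodable.decode m : Option Desc) with
    | none =>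
      obtain ⟨x, hx⟩ := hUne n
      exact ⟨x, by simp [h], hx⟩
    | some d =>
      by_cases hg : GoodDesc (σ n) (2 ^ n) d
      · have := goodDesc_meets (hσ n) Nat.one_le_two_pow hg
        simpa [h, hg] using this
      · obtain ⟨x, hx⟩ := hUne n
        exact ⟨x, by simp [h, hg], hx⟩
  · intro V hVo hVd n
    obtain ⟨d, h1, h2, h3, h4, h5⟩ := exists_desc hVo hVd (2 ^ n) ((σ n).length)
    refine ⟨Encodable.encode d, ?_⟩
    have hg : GoodDesc (σ n) (2 ^ n) d := ⟨h1, h2, by omega, h4⟩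
    intro x hx
    simp only [Encodable.encodek, Option.elim_some, if_pos hg] at hx
    obtain ⟨p, hp, w, hw, hxw⟩ := hx
    exact h5 p hp w hw hxw
  · intro n X hX
    set ds : List Desc :=
      (X.toList.filterMap (fun m => (Encodable.decode m : Option Desc))).filter
        (fun d => decide (GoodDesc (σ n) (2 ^ n) d)) with hds
    have hmemds : ∀ d ∈ ds, GoodDesc (σ n) (2 ^ n) d := by
      intro d hd
      exact of_decide_eq_true (List.mem_filter.1 hd).2
    have hlds : ds.length ≤ 2 ^ n := by
      have h1 := List.length_filter_le
        (fun d => decide (GoodDesc (σ n) (2 ^ n) d))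
        (X.toList.filterMap (fun m => (Encodable.decode m : Option Desc)))
      have h2 := List.length_filterMap_le
        (fun m => (Encodable.decode m : Option Desc)) X.toList
      have h3 : X.toList.length = X.card := Finset.length_toList X
      rw [hds]
      omega
    obtain ⟨x, _, hxall⟩ := chain_lemma ds.length ds [] rfl
      (fun d hd => ⟨(hmemds d hd).1, (hmemds d hd).2.1⟩)
      (by
        intro d hd
        have heq : d.filter (fun p => decide ((List.nil : List Bool).length ≤ p.1)) = d :=
          List.filter_eq_self.2 (fun p _ => by simp)
        rw [heq]
        have := (hmemds d hd).2.2.1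
        omega)
    refine ⟨x, Set.mem_iInter₂.2 ?_⟩
    intro j hj
    cases hdec : (Encodable.decode j : Option Desc) with
    | none => simp [hdec]
    | some d =>
      by_cases hg : GoodDesc (σ n) (2 ^ n) d
      · have hdmem : d ∈ ds := by
          rw [hds]
          exact List.mem_filter.2 ⟨List.mem_filterMap.2 ⟨j, Finset.mem_toList.2 hj, hdec⟩,
            decide_eq_true hg⟩
        simpa [hdec, hg] using hxall d hdmem
      · simp [hdec, hg]
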